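/- arXiv:2306.04525 — 3 statements merged into one kernel-verified Lean document; each statement's English description precedes it below -/
import Mathlib

section
/- Let (X_t)_{t≥0} be a stochastic process with values in the natural numbers, adapted to a filtration (𝓕_t), let B, α be natural numbers with B + 1 < α, and let q ∈ (0,1]. Suppose that almost surely X_{t+1} ≤ X_t + 1 for every t, and that for every t the conditional probability P(X_{t+1} ≤ B + 1 | 𝓕_t) is at least q almost surely. If X_0 ≤ B almost surely, then for every natural number T, the probability that there exists some t ≤ T with X_t ≥ α is at most T · (1 − q)^(α − B − 1). -/
open MeasureTheory

private theorem step_bound' {Ω : Type*} {m0 : MeasurableSpace Ω}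
    (μ : Measure Ω) [IsProbabilityMeasure μ]
    (ℱ : Filtration ℕ m0) (X : ℕ → Ω → ℕ) (B : ℕ) (q : ℝ) (hq1 : q ≤ 1)
    (hadapt : ∀ t, Measurable[ℱ t] (X t))
    (hshrink : ∀ t, ∀ᵐ ω ∂μ,
      q ≤ (μ[Set.indicator {ω' | X (t + 1) ω' ≤ B + 1} (fun _ => (1 : ℝ)) | ℱ t]) ω)
    (t : ℕ) (S : Set Ω) (hS : MeasurableSet[ℱ t] S) :
    μ (S ∩ {ω | B + 1 < X (t + 1) ω}) ≤ ENNReal.ofReal (1 - q) * μ S := by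
  have hXm : Measurable (X (t+1)) := (hadapt (t+1)).mono (ℱ.le (t+1)) le_rfl
  have hAm : MeasurableSet {ω' | X (t + 1) ω' ≤ B + 1} :=
    hXm (measurableSet_le measurable_id measurable_const)
  have hSm : MeasurableSet S := ℱ.le t S hS
  set g : Ω → ℝ := Set.indicator {ω' | X (t + 1) ω' ≤ B + 1} (fun _ => (1 : ℝ)) with hg
  have hgint : Integrable g μ := (integrable_const (1:ℝ)).indicator hAm
  have h1 : ∫ ω in S, (μ[g | ℱ t]) ω ∂μ = ∫ ω in S, g ω ∂μ :=
    setIntegral_condExp (ℱ.le t) hgint hS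
  have h2 : ∫ ω in S, g ω ∂μ = (μ (S ∩ {ω' | X (t + 1) ω' ≤ B + 1})).toReal := by
    rw [hg, setIntegral_indicator hAm]
    simp [Set.inter_comm, Measure.restrict_apply hAm]
    rfl
  have h3 : q * (μ S).toReal ≤ ∫ ω in S, (μ[g | ℱ t]) ω ∂μ := by
    have := setIntegral_mono_ae (μ := μ) (s := S) (f := fun _ => q)
      (integrable_const q).integrableOn integrable_condExp.integrableOn (hshrink t)
    simpa [mul_comm, measureReal_def] using this
  have hle : q * (μ S).toReal ≤ (μ (S ∩ {ω' | X (t + 1) ω' ≤ B + 1})).toReal := by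
    rw [← h2, ← h1]; exact h3
  have hsplit : μ (S ∩ {ω | B + 1 < X (t + 1) ω}) + μ (S ∩ {ω' | X (t + 1) ω' ≤ B + 1}) = μ S := by
    rw [← measure_union]
    · have hU : {ω | B + 1 < X (t + 1) ω} ∪ {ω' | X (t + 1) ω' ≤ B + 1} = Set.univ := by
        ext ω; simp only [Set.mem_union, Set.mem_setOf_eq, Set.mem_univ, iff_true]; omega
      rw [← Set.inter_union_distrib_left, hU, Set.inter_univ]
    · refine Set.disjoint_left.mpr fun ω h1 h2 => ?_
      have a : B + 1 < X (t + 1) ω := h1.2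
      have b : X (t + 1) ω ≤ B + 1 := h2.2
      omega
    · exact hSm.inter hAm
  have hne : ∀ A : Set Ω, μ A ≠ ⊤ := fun A => measure_ne_top μ A
  have hfin : (μ (S ∩ {ω | B + 1 < X (t + 1) ω})).toReal ≤ (1 - q) * (μ S).toReal := by
    have := congrArg ENNReal.toReal hsplit
    rw [ENNReal.toReal_add (hne _) (hne _)] at this
    nlinarith [hle]
  calc μ (S ∩ {ω | B + 1 < X (t + 1) ω})
      = ENNReal.ofReal (μ (S ∩ {ω | B + 1 < X (t + 1) ω})).toReal :=
        (ENNReal.ofReal_toReal (hne _)).symm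
    _ ≤ ENNReal.ofReal ((1 - q) * (μ S).toReal) := ENNReal.ofReal_le_ofReal hfin
    _ = ENNReal.ofReal (1 - q) * ENNReal.ofReal (μ S).toReal := by
        rw [ENNReal.ofReal_mul (by linarith)]
    _ = ENNReal.ofReal (1 - q) * μ S := by rw [ENNReal.ofReal_toReal (hne _)]

private theorem run_bound' {Ω : Type*} {m0 : MeasurableSpace Ω}
    (μ : Measure Ω) [IsProbabilityMeasure μ]
    (ℱ : Filtration ℕ m0) (X : ℕ → Ω → ℕ) (B : ℕ) (q : ℝ) (hq1 : q ≤ 1)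
    (hadapt : ∀ t, Measurable[ℱ t] (X t))
    (hshrink : ∀ t, ∀ᵐ ω ∂μ,
      q ≤ (μ[Set.indicator {ω' | X (t + 1) ω' ≤ B + 1} (fun _ => (1 : ℝ)) | ℱ t]) ω)
    (s : ℕ) : ∀ j : ℕ,
      μ {ω | ∀ i < j, B + 1 < X (s + i + 1) ω} ≤ ENNReal.ofReal ((1 - q) ^ j) := by
  have hmeas : ∀ j : ℕ, MeasurableSet[ℱ (s + j)] {ω | ∀ i < j, B + 1 < X (s + i + 1) ω} := by
    intro j
    have : {ω | ∀ i < j, B + 1 < X (s + i + 1) ω}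
        = ⋂ i, ⋂ (_ : i < j), {ω | B + 1 < X (s + i + 1) ω} := by
      ext ω; simp
    rw [this]
    refine MeasurableSet.iInter fun i => MeasurableSet.iInter fun hi => ?_
    have hm : MeasurableSet[ℱ (s + i + 1)] {ω | B + 1 < X (s + i + 1) ω} :=
      (hadapt (s + i + 1)) (measurableSet_lt measurable_const measurable_id)
    exact ℱ.mono (by omega) _ hm
  intro j
  induction j with
  | zero =>
    simp
  | succ j ih =>
    have hset : {ω | ∀ i < j + 1, B + 1 < X (s + i + 1) ω}
        = {ω | ∀ i < j, B + 1 < X (s + i + 1) ω} ∩ {ω | B + 1 < X ((s + j) + 1) ω} := by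
      ext ω
      constructor
      · exact fun h => ⟨fun i hi => h i (by omega), h j (by omega)⟩
      · rintro ⟨h1, h2⟩ i hi
        rcases Nat.lt_succ_iff_lt_or_eq.mp hi with h | h
        · exact h1 i h
        · subst h; exact h2
    rw [hset]
    calc μ ({ω | ∀ i < j, B + 1 < X (s + i + 1) ω} ∩ {ω | B + 1 < X ((s + j) + 1) ω})
        ≤ ENNReal.ofReal (1 - q) * μ {ω | ∀ i < j, B + 1 < X (s + i + 1) ω} :=
          step_bound' μ ℱ X B q hq1 hadapt hshrink (s + j) _ (hmeas j)
      _ ≤ ENNReal.ofReal (1 - q) * ENNReal.ofReal ((1 - q) ^ j) := by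
          exact mul_le_mul_right ih _
      _ = ENNReal.ofReal ((1 - q) ^ (j + 1)) := by
          rw [← ENNReal.ofReal_mul (by linarith)]
          ring_nf

/-- Let `(X_t)` be an ℕ-valued process adapted to a filtration `ℱ`, increasing by at most 1
per step, such that at every step the conditional probability (given `ℱ t`) of dropping to
a value at most `B + 1` is at least `q`. If `X_0 ≤ B` a.s., then the probability that
`X_t ≥ α` for some `t ≤ T` is at most `T (1 - q)^(α - B - 1)`. -/
theorem prob_reach_high_level_le {Ω : Type*} {m0 : MeasurableSpace Ω}
    (μ : Measure Ω) [IsProbabilityMeasure μ]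
    (ℱ : Filtration ℕ m0) (X : ℕ → Ω → ℕ)
    (B α : ℕ) (hBα : B + 1 < α) (q : ℝ) (hq0 : 0 < q) (hq1 : q ≤ 1)
    (hadapt : ∀ t, Measurable[ℱ t] (X t))
    (hstep : ∀ t, ∀ᵐ ω ∂μ, X (t + 1) ω ≤ X t ω + 1)
    (hshrink : ∀ t, ∀ᵐ ω ∂μ,
      q ≤ (μ[Set.indicator {ω' | X (t + 1) ω' ≤ B + 1} (fun _ => (1 : ℝ)) | ℱ t]) ω)
    (h0 : ∀ᵐ ω ∂μ, X 0 ω ≤ B) (T : ℕ) :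
    μ {ω | ∃ t ≤ T, α ≤ X t ω} ≤
      ENNReal.ofReal ((T : ℝ) * (1 - q) ^ (α - B - 1)) := by
  set k : ℕ := α - B - 1 with hkdef
  have hk1 : 1 ≤ k := by omega
  have hkα : B + 1 + k = α := by omega
  set A : ℕ → Set Ω := fun s => {ω | ∀ i < k, B + 1 < X (s + i + 1) ω} with hA
  have hAbd : ∀ s, μ (A s) ≤ ENNReal.ofReal ((1 - q) ^ k) := fun s =>
    run_bound' μ ℱ X B q hq1 hadapt hshrink s k
  have hGae : ∀ᵐ ω ∂μ, X 0 ω ≤ B ∧ ∀ t, X (t + 1) ω ≤ X t ω + 1 :=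
    h0.and (ae_all_iff.mpr hstep)
  -- pointwise inclusion
  have hsub : ∀ ω, X 0 ω ≤ B → (∀ t, X (t + 1) ω ≤ X t ω + 1) →
      (∃ t ≤ T, α ≤ X t ω) → ω ∈ ⋃ s ∈ Finset.range T, A s := by
    rintro ω h0ω hstepω ⟨t, htT, hαt⟩
    have hincr : ∀ a d : ℕ, X (a + d) ω ≤ X a ω + d := by
      intro a d
      induction d with
      | zero => simp
      | succ d ih =>
        calc X (a + (d + 1)) ω = X ((a + d) + 1) ω := by ring_nf
          _ ≤ X (a + d) ω + 1 := hstepω (a + d)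
          _ ≤ X a ω + (d + 1) := by omega
    have ht1 : 1 ≤ t := by
      rcases Nat.eq_zero_or_pos t with h | h
      · subst h; omega
      · exact h
    set Sf : Finset ℕ := (Finset.range t).filter (fun r => X r ω ≤ B + 1) with hSf
    have hne : Sf.Nonempty := ⟨0, by
      simp only [hSf, Finset.mem_filter, Finset.mem_range]
      exact ⟨by omega, by omega⟩⟩
    set s : ℕ := Sf.max' hne with hs
    have hsmem : s ∈ Sf := Finset.max'_mem _ _
    have hst : s < t := by
      have := (Finset.mem_filter.mp hsmem).1
      exact Finset.mem_range.mp this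
    have hsB : X s ω ≤ B + 1 := (Finset.mem_filter.mp hsmem).2
    have hgap : ∀ r, s < r → r ≤ t → B + 1 < X r ω := by
      intro r h1 h2
      by_contra hcon
      push_neg at hcon
      rcases Nat.lt_or_ge r t with h | h
      · have : r ∈ Sf := Finset.mem_filter.mpr ⟨Finset.mem_range.mpr h, hcon⟩
        have := Finset.le_max' Sf r this
        omega
      · have : r = t := by omega
        subst this
        omega
    have hts : s + k ≤ t := by
      have h1 : X t ω ≤ X s ω + (t - s) := by
        have := hincr s (t - s)
        rwa [show s + (t - s) = t by omega] at this
      omega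
    simp only [Set.mem_iUnion, Finset.mem_range]
    refine ⟨s, by omega, fun i hi => ?_⟩
    exact hgap (s + i + 1) (by omega) (by omega)
  have hmono : μ {ω | ∃ t ≤ T, α ≤ X t ω} ≤ μ (⋃ s ∈ Finset.range T, A s) := by
    refine measure_mono_ae ?_
    filter_upwards [hGae] with ω hω hbad
    exact hsub ω hω.1 hω.2 hbad
  have hq' : (0:ℝ) ≤ (1 - q) ^ k := pow_nonneg (by linarith) k
  calc μ {ω | ∃ t ≤ T, α ≤ X t ω}
      ≤ μ (⋃ s ∈ Finset.range T, A s) := hmono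
    _ ≤ ∑ s ∈ Finset.range T, μ (A s) := measure_biUnion_finset_le _ _
    _ ≤ ∑ _s ∈ Finset.range T, ENNReal.ofReal ((1 - q) ^ k) :=
        Finset.sum_le_sum fun s _ => hAbd s
    _ = (T : ℕ∞).toENNReal * ENNReal.ofReal ((1 - q) ^ k) := by
        simp [Finset.sum_const, nsmul_eq_mul]
    _ ≤ ENNReal.ofReal ((T : ℝ) * (1 - q) ^ k) := by
        rw [ENNReal.ofReal_mul (by positivity)]
        simp [ENNReal.ofReal_natCast]
end

section
/- Let n ≥ 1 and let F := {1^i 0^{n−i} : 0 ≤ i ≤ n} ⊆ {0,1}^n be the set of bit strings consisting of a prefix of i ones followed by n−i zeros. Let x ∈ {0,1}^n and let y be the random bit string obtained from x by standard bit mutation with rate 1/n, i.e., each bit of x is flipped independently with probability 1/n. Then P(y ∈ F) ≤ 1/e + 3/n if x ∈ F, and P(y ∈ F) ≤ 3/n if x ∉ F. -/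
/-- `onesZeros n i` is the bit string `1^i 0^(n-i)`. -/
def onesZeros (n i : ℕ) : Fin n → Bool := fun k => decide ((k : ℕ) < i)

/-- The Pareto set of LOTZ: all bit strings `1^i 0^(n-i)` for `0 ≤ i ≤ n`. -/
def paretoSet (n : ℕ) : Finset (Fin n → Bool) := (Finset.range (n + 1)).image (onesZeros n)

/-- Standard bit mutation with rate `1/n`: each bit of `x` is flipped independently with
probability `1/n`; `mutProb n x z` is the probability that the result equals `z`. -/
noncomputable def mutProb (n : ℕ) (x z : Fin n → Bool) : ℝ :=
  ∏ i : Fin n, if z i = x i then 1 - 1 / (n : ℝ) else 1 / (n : ℝ)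

/- auxiliary: extended bit string -/
def xb (n : ℕ) (x : Fin n → Bool) : ℕ → Bool := fun i => if h : i < n then x ⟨i, h⟩ else false

/- auxiliary: Hamming distance from x to onesZeros n i, as a count over `range n`. -/
def Dn (n : ℕ) (x : Fin n → Bool) (i : ℕ) : ℕ :=
  ((Finset.range n).filter (fun k => xb n x k ≠ decide (k < i))).card

lemma card_fin_filter (n : ℕ) (p : ℕ → Prop) [DecidablePred p] :
    (Finset.univ.filter (fun k : Fin n => p k.val)).card
      = ((Finset.range n).filter p).card := by
  rw [← Finset.card_image_of_injective _ Fin.val_injective]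
  congr 1
  ext a
  simp only [Finset.mem_image, Finset.mem_filter, Finset.mem_univ, true_and,
    Finset.mem_range]
  constructor
  · rintro ⟨k, hk, rfl⟩; exact ⟨k.isLt, hk⟩
  · rintro ⟨ha, hp⟩; exact ⟨⟨a, ha⟩, hp, rfl⟩

lemma mutProb_onesZeros (n : ℕ) (x : Fin n → Bool) (i : ℕ) :
    mutProb n x (onesZeros n i)
      = (1 / (n : ℝ)) ^ (Dn n x i) * (1 - 1 / (n : ℝ)) ^ (n - Dn n x i) := by
  have hx : ∀ k : Fin n, x k = xb n x k.val := by
    intro k; simp [xb, k.isLt]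
  have hcond : ∀ k : Fin n,
      (onesZeros n i k = x k) ↔ ¬ (xb n x k.val ≠ decide (k.val < i)) := by
    intro k
    rw [hx k]
    simp [onesZeros, eq_comm]
  unfold mutProb
  rw [Finset.prod_congr rfl (fun k _ => by
    rw [if_congr (hcond k) rfl rfl])]
  rw [Finset.prod_ite]
  rw [Finset.prod_const, Finset.prod_const]
  have h1 : (Finset.univ.filter (fun k : Fin n => ¬ ¬ (xb n x k.val ≠ decide (k.val < i)))).card
      = Dn n x i := by
    simpa [Dn] using card_fin_filter n (fun a => xb n x a ≠ decide (a < i))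
  have h2 : (Finset.univ.filter (fun k : Fin n => ¬ (xb n x k.val ≠ decide (k.val < i)))).card
      = n - Dn n x i := by
    have := Finset.card_filter_add_card_filter_not
      (s := (Finset.univ : Finset (Fin n)))
      (p := fun k : Fin n => ¬ (xb n x k.val ≠ decide (k.val < i)))
    simp only [Finset.card_univ, Fintype.card_fin] at this
    omega
  rw [h1, h2, mul_comm]

lemma onesZeros_inj (n : ℕ) {i j : ℕ} (hi : i ≤ n) (hj : j ≤ n)
    (h : onesZeros n i = onesZeros n j) : i = j := by
  by_contra hne
  rcases Ne.lt_or_gt hne with hlt | hlt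
  · have hi' : i < n := lt_of_lt_of_le hlt hj
    have := congrFun h ⟨i, hi'⟩
    simp [onesZeros, hlt] at this
  · have hj' : j < n := lt_of_lt_of_le hlt hi
    have := congrFun h ⟨j, hj'⟩
    simp [onesZeros, hlt] at this

lemma xb_true_lt {n : ℕ} {x : Fin n → Bool} {i : ℕ} (h : xb n x i = true) : i < n := by
  by_contra hc
  simp [xb, hc] at h

lemma level_card (n d : ℕ) (x : Fin n → Bool) :
    ((Finset.range (n+1)).filter (fun i => Dn n x i = d)).card ≤ 2*d + 1 := by
  set S := (Finset.range (n+1)).filter (fun i => Dn n x i = d) with hS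
  rcases S.eq_empty_or_nonempty with he | hne
  · simp [he]
  · set m := S.min' hne with hm
    set M := S.max' hne with hMdef
    have hmS : m ∈ S := S.min'_mem hne
    have hMS : M ∈ S := S.max'_mem hne
    have hDm : Dn n x m = d := (Finset.mem_filter.mp hmS).2
    have hDM : Dn n x M = d := (Finset.mem_filter.mp hMS).2
    set A := S.filter (fun i => xb n x i = true) with hA
    set B := S.filter (fun i => xb n x i = false ∧ i < M) with hB
    have hsub : S ⊆ (A ∪ B) ∪ {M} := by
      intro i hi
      rcases Bool.eq_false_or_eq_true (xb n x i) with hb | hb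
      · exact Finset.mem_union_left _ (Finset.mem_union_left _
          (Finset.mem_filter.mpr ⟨hi, hb⟩))
      · rcases Nat.lt_or_ge i M with hiM | hiM
        · exact Finset.mem_union_left _ (Finset.mem_union_right _
            (Finset.mem_filter.mpr ⟨hi, hb, hiM⟩))
        · have : i = M := le_antisymm (S.le_max' i hi) hiM
          exact Finset.mem_union_right _ (by simp [this])
    have hcardA : A.card ≤ d := by
      rw [← hDm]
      apply Finset.card_le_card
      intro i hi
      obtain ⟨hiS, hib⟩ := Finset.mem_filter.mp hi
      have hin : i < n := xb_true_lt hib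
      have hmi : m ≤ i := S.min'_le i hiS
      refine Finset.mem_filter.mpr ⟨Finset.mem_range.mpr hin, ?_⟩
      simp [hib, Nat.not_lt.mpr hmi]
    have hcardB : B.card ≤ d := by
      rw [← hDM]
      apply Finset.card_le_card
      intro i hi
      obtain ⟨hiS, hib, hiM⟩ := Finset.mem_filter.mp hi
      have hMn : M ≤ n := by
        have := (Finset.mem_filter.mp hMS).1
        exact Nat.lt_succ_iff.mp (Finset.mem_range.mp this)
      refine Finset.mem_filter.mpr ⟨Finset.mem_range.mpr (lt_of_lt_of_le hiM hMn), ?_⟩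
      simp [hib, hiM]
    calc S.card ≤ ((A ∪ B) ∪ {M}).card := Finset.card_le_card hsub
      _ ≤ (A ∪ B).card + 1 := by
          refine le_trans (Finset.card_union_le _ _) ?_
          simp
      _ ≤ A.card + B.card + 1 := by
          have := Finset.card_union_le A B
          omega
      _ ≤ 2*d + 1 := by omega

lemma le_choose_of {m k : ℕ} (h1 : 1 ≤ k) (h2 : k < m) : m ≤ m.choose k := by
  induction m with
  | zero => omega
  | succ m ih =>
    obtain ⟨k', rfl⟩ : ∃ k', k = k' + 1 := ⟨k - 1, by omega⟩
    have hps : (m+1).choose (k'+1) = m.choose k' + m.choose (k'+1) :=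
      Nat.choose_succ_succ _ _
    rcases Nat.eq_or_lt_of_le (Nat.lt_succ_iff.mp h2) with he | hlt
    · rw [← he, Nat.choose_succ_self_right]
    · rcases Nat.eq_zero_or_pos k' with rfl | hk'
      · have h0 : (m+1).choose (0+1) = m+1 := Nat.choose_one_right _
        omega
      · have h3 := ih hlt
        have h4 : 0 < m.choose k' := Nat.choose_pos (by omega)
        omega

lemma nat_coef_le {n d : ℕ} (hn : 3 ≤ n) (hd : 1 ≤ d) (hdn : d ≤ n) (hd2 : d ≠ 2)
    (hdn' : d ≠ n) : min (2*d+1) (n+1) ≤ 3 * (n-1).choose (d-1) := by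
  rcases Nat.eq_or_lt_of_le hd with h1 | h1
  · rw [← h1]
    have h0 : (n-1).choose (1-1) = 1 := Nat.choose_zero_right _
    have h5 : min (2*1+1) (n+1) ≤ 2*1+1 := min_le_left _ _
    omega
  · have hd3 : 3 ≤ d := by omega
    have hch : n - 1 ≤ (n-1).choose (d-1) := le_choose_of (by omega) (by omega)
    have : min (2*d+1) (n+1) ≤ n + 1 := min_le_right _ _
    omega

lemma analytic (n : ℕ) (hn : 1 ≤ n) :
    ∑ d ∈ Finset.Icc 1 n,
      ((min (2*d+1) (n+1) : ℕ) : ℝ) * ((1/(n:ℝ))^d * (1-1/(n:ℝ))^(n-d)) ≤ 3 / n := by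
  set q : ℝ := 1/(n:ℝ) with hq
  set p : ℝ := 1 - 1/(n:ℝ) with hp
  have hn0 : (0:ℝ) < n := by exact_mod_cast hn
  have hq0 : 0 ≤ q := by positivity
  have hp0 : 0 ≤ p := by
    rw [hp, sub_nonneg, div_le_one hn0]
    exact_mod_cast hn
  have hqp : q + p = 1 := by ring
  have hTnn : ∀ d : ℕ, 0 ≤ q^d * p^(n-d) := fun d => by positivity
  have hrhs : (3 / (n:ℝ)) = ∑ d ∈ Finset.Icc 1 n,
      (3 * ((n-1).choose (d-1) : ℝ)) * (q^d * p^(n-d)) := by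
    have h1 : (3 / (n:ℝ)) = 3 * q * (q + p)^(n-1) := by rw [hqp]; simp [hq]; ring
    rw [h1, add_pow, Finset.mul_sum, ← Finset.Ico_add_one_right_eq_Icc,
      Finset.sum_Ico_eq_sum_range]
    have hr : n - 1 + 1 = n := by omega
    have hr2 : n + 1 - 1 = n := by omega
    rw [hr, hr2]
    apply Finset.sum_congr rfl
    intro k hk
    simp only [Finset.mem_range] at hk
    have h2 : n - (1+k) = n - 1 - k := by omega
    have h3 : 1 + k - 1 = k := by omega
    rw [h2, h3]
    ring
  rw [hrhs]
  rcases Nat.lt_or_ge n 3 with hn3 | hn3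
  · apply Finset.sum_le_sum
    intro d hd
    simp only [Finset.mem_Icc] at hd
    obtain ⟨hd1, hdn⟩ := hd
    apply mul_le_mul_of_nonneg_right _ (hTnn d)
    have h : min (2*d+1) (n+1) ≤ 3 * (n-1).choose (d-1) := by
      interval_cases n <;> interval_cases d <;> decide
    exact_mod_cast h
  · set f : ℕ → ℝ := fun d => ((min (2*d+1) (n+1) : ℕ) : ℝ) * (q^d * p^(n-d)) with hf
    set g : ℕ → ℝ := fun d => (3 * ((n-1).choose (d-1) : ℝ)) * (q^d * p^(n-d)) with hg
    have hnmem : n ∈ Finset.Icc 1 n := by simp [hn]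
    have h2mem : 2 ∈ (Finset.Icc 1 n).erase n := by
      simp only [Finset.mem_erase, Finset.mem_Icc]
      omega
    have hsplit : ∀ F : ℕ → ℝ, ∑ d ∈ Finset.Icc 1 n, F d
        = ∑ d ∈ ((Finset.Icc 1 n).erase n).erase 2, F d + F 2 + F n := by
      intro F
      rw [Finset.sum_erase_add _ _ h2mem, Finset.sum_erase_add _ _ hnmem]
    rw [hsplit f, hsplit g]
    have hterm : ∑ d ∈ ((Finset.Icc 1 n).erase n).erase 2, f d
        ≤ ∑ d ∈ ((Finset.Icc 1 n).erase n).erase 2, g d := by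
      apply Finset.sum_le_sum
      intro d hd
      simp only [Finset.mem_erase, Finset.mem_Icc] at hd
      obtain ⟨hd2, hdn, hd1, hdn'⟩ := hd
      apply mul_le_mul_of_nonneg_right _ (hTnn d)
      exact_mod_cast nat_coef_le hn3 hd1 hdn' hd2 hdn
    have hpair : f 2 + f n ≤ g 2 + g n := by
      simp only [hf, hg]
      have hc2 : ((min (2*2+1) (n+1) : ℕ) : ℝ) ≤ 5 := by
        have h : min (2*2+1) (n+1) ≤ 5 := min_le_left _ _
        exact_mod_cast h
      have hcn : ((min (2*n+1) (n+1) : ℕ) : ℝ) = (n:ℝ)+1 := by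
        have h : min (2*n+1) (n+1) = n+1 := by omega
        rw [h]; push_cast; ring
      have hg2 : (3 * ((n-1).choose (2-1) : ℝ)) = 3*((n:ℝ)-1) := by
        rw [show (2-1 : ℕ) = 1 from rfl, Nat.choose_one_right]
        rw [Nat.cast_sub hn]
        push_cast; ring
      have hgn : (3 * ((n-1).choose (n-1) : ℝ)) = 3 := by simp
      rw [hcn, hg2, hgn]
      have hTn : q^n * p^(n-n) = q^n := by simp
      rw [hTn]
      have h2n : (2:ℝ) ≤ n := by
        have : (3:ℕ) ≤ n := hn3
        exact_mod_cast this.trans' (by norm_num)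
      have hqlep : q ≤ p := by
        have h12 : q ≤ 1/2 := by
          rw [hq]
          exact one_div_le_one_div_of_le (by norm_num) h2n
        rw [hp, ← hq]
        linarith
      have h3n : (3:ℝ) ≤ n := by exact_mod_cast hn3
      have hkey : ((n:ℝ) - 2) * q^n ≤ (3*(n:ℝ) - 8) * (q^2 * p^(n-2)) := by
        have hqn : q^n = q^2 * q^(n-2) := by
          rw [← pow_add]
          congr 1
          omega
        rw [hqn]
        have h1 : q^(n-2) ≤ p^(n-2) := pow_le_pow_left₀ hq0 hqlep _
        calc ((n:ℝ) - 2) * (q^2 * q^(n-2)) ≤ ((n:ℝ) - 2) * (q^2 * p^(n-2)) := by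
              apply mul_le_mul_of_nonneg_left _ (by linarith)
              apply mul_le_mul_of_nonneg_left h1 (by positivity)
          _ ≤ (3*(n:ℝ) - 8) * (q^2 * p^(n-2)) := by
              apply mul_le_mul_of_nonneg_right (by linarith) (by positivity)
      have hT2 : 0 ≤ q^2 * p^(n-2) := hTnn 2
      have hTn0 : 0 ≤ q^n := by positivity
      nlinarith [mul_le_mul_of_nonneg_right hc2 hT2, hkey]
    linarith

lemma Dn_le (n : ℕ) (x : Fin n → Bool) (i : ℕ) : Dn n x i ≤ n := by
  calc Dn n x i ≤ (Finset.range n).card := Finset.card_filter_le _ _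
    _ = n := Finset.card_range n

lemma Dn_eq_zero_iff (n : ℕ) (x : Fin n → Bool) (i : ℕ) :
    Dn n x i = 0 ↔ x = onesZeros n i := by
  rw [Dn, Finset.card_eq_zero, Finset.filter_eq_empty_iff]
  constructor
  · intro h
    funext k
    have hk := h (Finset.mem_range.mpr k.isLt)
    simp only [ne_eq, not_not] at hk
    have hxb : xb n x k.val = x k := by simp [xb, k.isLt]
    rw [hxb] at hk
    exact hk
  · intro h k hk
    simp only [ne_eq, not_not]
    have hkn := Finset.mem_range.mp hk
    have hxb : xb n x k = x ⟨k, hkn⟩ := by simp [xb, hkn]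
    rw [hxb, h]
    rfl

/-- The probability that standard bit mutation applied to `x` creates an offspring in the
Pareto set `F = {1^i 0^(n-i) : 0 ≤ i ≤ n}` of LOTZ is at most `1/e + 3/n` if `x ∈ F`
and at most `3/n` otherwise. -/
theorem prob_mutation_hits_paretoSet (n : ℕ) (hn : 1 ≤ n) (x : Fin n → Bool) :
    ∑ z ∈ paretoSet n, mutProb n x z ≤
      if x ∈ paretoSet n then 1 / Real.exp 1 + 3 / (n : ℝ) else 3 / (n : ℝ) := by
  have hn0 : (0:ℝ) < n := by exact_mod_cast hn
  set q : ℝ := 1/(n:ℝ) with hq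
  set p : ℝ := 1 - 1/(n:ℝ) with hp
  have hq0 : 0 ≤ q := by positivity
  have hp0 : 0 ≤ p := by
    rw [hp, sub_nonneg, div_le_one hn0]; exact_mod_cast hn
  set F : ℕ → ℝ := fun i => q ^ (Dn n x i) * p ^ (n - Dn n x i) with hF
  have hFnn : ∀ i, 0 ≤ F i := fun i => by positivity
  have hsum : ∑ z ∈ paretoSet n, mutProb n x z = ∑ i ∈ Finset.range (n+1), F i := by
    rw [paretoSet, Finset.sum_image]
    · exact Finset.sum_congr rfl fun i _ => mutProb_onesZeros n x i
    · intro i hi j hj h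
      exact onesZeros_inj n (Nat.lt_succ_iff.mp (Finset.mem_range.mp hi))
        (Nat.lt_succ_iff.mp (Finset.mem_range.mp hj)) h
  rw [hsum]
  rw [← Finset.sum_filter_add_sum_filter_not (Finset.range (n+1)) (fun i => Dn n x i = 0) F]
  -- Part B : the nonzero-distance part is ≤ 3/n
  have hB : ∑ i ∈ (Finset.range (n+1)).filter (fun i => ¬ Dn n x i = 0), F i ≤ 3 / n := by
    set T := (Finset.range (n+1)).filter (fun i => ¬ Dn n x i = 0) with hT
    have hmaps : ∀ i ∈ T, Dn n x i ∈ Finset.Icc 1 n := by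
      intro i hi
      have := (Finset.mem_filter.mp hi).2
      exact Finset.mem_Icc.mpr ⟨by omega, Dn_le n x i⟩
    rw [← Finset.sum_fiberwise_of_maps_to hmaps]
    refine le_trans (Finset.sum_le_sum ?_) (analytic n hn)
    intro d hd
    have hinner : ∑ i ∈ T.filter (fun i => Dn n x i = d), F i
        = (T.filter (fun i => Dn n x i = d)).card • (q^d * p^(n-d)) := by
      rw [Finset.sum_congr rfl (fun i hi => ?_), Finset.sum_const]
      have := (Finset.mem_filter.mp hi).2
      rw [hF]
      simp only [this]
    rw [hinner, nsmul_eq_mul]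
    apply mul_le_mul_of_nonneg_right _ (by positivity)
    have h1 : (T.filter (fun i => Dn n x i = d)).card ≤ 2*d+1 := by
      refine le_trans (Finset.card_le_card ?_) (level_card n d x)
      intro i hi
      obtain ⟨hiT, hid⟩ := Finset.mem_filter.mp hi
      exact Finset.mem_filter.mpr ⟨(Finset.mem_filter.mp hiT).1, hid⟩
    have h2 : (T.filter (fun i => Dn n x i = d)).card ≤ n+1 := by
      calc (T.filter (fun i => Dn n x i = d)).card ≤ T.card := Finset.card_filter_le _ _
        _ ≤ (Finset.range (n+1)).card := Finset.card_filter_le _ _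
        _ = n+1 := Finset.card_range _
    have : (T.filter (fun i => Dn n x i = d)).card ≤ min (2*d+1) (n+1) := le_min h1 h2
    exact_mod_cast this
  -- Part A
  have hpn : p ^ n ≤ 1 / Real.exp 1 := by
    have h1 : p ≤ Real.exp (-(1/(n:ℝ))) := by
      have := Real.add_one_le_exp (-(1/(n:ℝ)))
      rw [hp]; linarith
    calc p ^ n ≤ (Real.exp (-(1/(n:ℝ))))^n := pow_le_pow_left₀ hp0 h1 n
      _ = Real.exp ((n:ℝ) * (-(1/(n:ℝ)))) := by rw [← Real.exp_nat_mul]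
      _ = Real.exp (-1) := by
          congr 1
          field_simp
      _ = 1 / Real.exp 1 := by rw [Real.exp_neg]; rw [one_div]
  by_cases hxF : x ∈ paretoSet n
  · rw [if_pos hxF]
    have hA : ∑ i ∈ (Finset.range (n+1)).filter (fun i => Dn n x i = 0), F i
        ≤ 1 / Real.exp 1 := by
      set S0 := (Finset.range (n+1)).filter (fun i => Dn n x i = 0) with hS0
      have hcard : S0.card ≤ 1 := by
        apply Finset.card_le_one.mpr
        intro i hi j hj
        obtain ⟨hi1, hi2⟩ := Finset.mem_filter.mp hi
        obtain ⟨hj1, hj2⟩ := Finset.mem_filter.mp hj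
        have hxi := (Dn_eq_zero_iff n x i).mp hi2
        have hxj := (Dn_eq_zero_iff n x j).mp hj2
        exact onesZeros_inj n (Nat.lt_succ_iff.mp (Finset.mem_range.mp hi1))
          (Nat.lt_succ_iff.mp (Finset.mem_range.mp hj1)) (hxi ▸ hxj ▸ rfl)
      have hsum0 : ∑ i ∈ S0, F i = S0.card • (p ^ n) := by
        rw [Finset.sum_congr rfl (fun i hi => ?_), Finset.sum_const]
        have h0 := (Finset.mem_filter.mp hi).2
        rw [hF]
        simp only [h0, pow_zero, one_mul, Nat.sub_zero]
      rw [hsum0, nsmul_eq_mul]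
      calc (S0.card : ℝ) * p ^ n ≤ 1 * p ^ n := by
            apply mul_le_mul_of_nonneg_right _ (by positivity)
            exact_mod_cast hcard
        _ = p ^ n := one_mul _
        _ ≤ 1 / Real.exp 1 := hpn
    linarith
  · rw [if_neg hxF]
    have hA : ∑ i ∈ (Finset.range (n+1)).filter (fun i => Dn n x i = 0), F i = 0 := by
      rw [Finset.sum_eq_zero]
      intro i hi
      exfalso
      obtain ⟨hi1, hi2⟩ := Finset.mem_filter.mp hi
      exact hxF (Finset.mem_image.mpr ⟨i, hi1, ((Dn_eq_zero_iff n x i).mp hi2).symm⟩)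
    linarith
end

section
/- Let n ≥ 1, let F := {1^i 0^{n−i} : 0 ≤ i ≤ n} ⊆ {0,1}^n be the set of bit strings consisting of a prefix of i ones followed by n−i zeros, and let x ∈ {0,1}^n with x ∉ F. Then the set {z ∈ F : H(x,z) = 1} has at most two elements, where H(x,z) denotes the Hamming distance between x and z. -/
lemma hd_onesZeros (n i j : ℕ) (hij : i ≤ j) (hj : j ≤ n) :
    hammingDist (onesZeros n i) (onesZeros n j) = j - i := by
  unfold hammingDist onesZeros
  have h1 : (Finset.univ.filter fun k : Fin n =>
      (decide ((k : ℕ) < i) ≠ decide ((k : ℕ) < j))).card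
      = ((Finset.range n).filter fun k => decide (k < i) ≠ decide (k < j)).card := by
    apply Finset.card_bij (fun (k : Fin n) _ => (k : ℕ))
    · intro a ha
      simp only [Finset.mem_filter, Finset.mem_range] at *
      exact ⟨a.isLt, ha.2⟩
    · intro a _ b _ h
      exact Fin.val_injective h
    · intro b hb
      simp only [Finset.mem_filter, Finset.mem_range] at hb
      exact ⟨⟨b, hb.1⟩, by simpa using hb.2, rfl⟩
  have h2 : ((Finset.range n).filter fun k => decide (k < i) ≠ decide (k < j))
      = Finset.Ico i j := by
    ext k
    simp only [Finset.mem_filter, Finset.mem_range, Finset.mem_Ico, ne_eq,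
      decide_eq_decide]
    omega
  simp only [h1, h2, Nat.card_Ico]

lemma unique_mismatch (n : ℕ) (x z : Fin n → Bool) (h : hammingDist x z = 1) :
    ∃ p : Fin n, ∀ k, x k ≠ z k ↔ k = p := by
  unfold hammingDist at h
  obtain ⟨p, hp⟩ := Finset.card_eq_one.mp h
  refine ⟨p, fun k => ?_⟩
  constructor
  · intro hk
    have : k ∈ Finset.univ.filter fun i => x i ≠ z i := by simp [hk]
    rw [hp] at this
    simpa using this
  · intro hk
    have hm : p ∈ Finset.univ.filter (fun i => x i ≠ z i) := by rw [hp]; simp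
    rw [hk]
    simpa using hm

lemma key_lemma (n : ℕ) (x : Fin n → Bool) (hx : x ∉ paretoSet n)
    (i j : ℕ) (hij : i < j) (hj : j ≤ n)
    (h1 : hammingDist x (onesZeros n i) = 1)
    (h2 : hammingDist x (onesZeros n j) = 1) : j = i + 2 := by
  have htri : hammingDist (onesZeros n i) (onesZeros n j) ≤ 2 := by
    calc hammingDist (onesZeros n i) (onesZeros n j)
        ≤ hammingDist (onesZeros n i) x + hammingDist x (onesZeros n j) :=
          hammingDist_triangle _ _ _
      _ = 2 := by rw [hammingDist_comm, h1, h2]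
  rw [hd_onesZeros n i j (le_of_lt hij) hj] at htri
  -- exclude j = i + 1
  have hne : j ≠ i + 1 := by
    intro hj1
    subst hj1
    have hin : i < n := by omega
    set ii : Fin n := ⟨i, hin⟩ with hii
    obtain ⟨p, hp⟩ := unique_mismatch n x (onesZeros n i) h1
    obtain ⟨q, hq⟩ := unique_mismatch n x (onesZeros n (i + 1)) h2
    have hzi : onesZeros n i ii = false := by simp [onesZeros, hii]
    have hzj : onesZeros n (i + 1) ii = true := by simp [onesZeros, hii]
    have hsame : ∀ k : Fin n, k ≠ ii → onesZeros n i k = onesZeros n (i + 1) k := by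
      intro k hk
      have : (k : ℕ) ≠ i := fun h => hk (Fin.ext h)
      simp only [onesZeros, decide_eq_decide]
      omega
    cases hxi : x ii with
    | true =>
      -- x = onesZeros n (i+1), contradicting x ∉ paretoSet
      apply hx
      have hxeq : x = onesZeros n (i + 1) := by
        funext k
        by_cases hk : k = ii
        · subst hk; rw [hxi, hzj]
        · have hiieq : ii = p := (hp ii).mp (by rw [hxi, hzi]; simp)
          have hkp : k ≠ p := fun h => hk (h.trans hiieq.symm)
          have hxk : x k = onesZeros n i k := by
            by_contra hcon
            exact hkp ((hp k).mp hcon)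
          rw [hxk, hsame k hk]
      rw [hxeq]
      exact Finset.mem_image.mpr ⟨i + 1, Finset.mem_range.mpr (by omega), rfl⟩
    | false =>
      -- x ii = false: mismatch with z_{i+1} at ii, so q = ii; but also p ≠ ii,
      -- and x p ≠ z_i p = z_{i+1} p, so p = q = ii, contradiction
      have hq_ii : ii = q := (hq ii).mp (by rw [hxi, hzj]; simp)
      have hp_ne : ii ≠ p := by
        intro h
        have := (hp ii).mpr h
        rw [hxi, hzi] at this
        exact this rfl
      have hxp : x p ≠ onesZeros n i p := (hp p).mpr rfl
      have hpii : p ≠ ii := fun h => hp_ne h.symm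
      rw [hsame p hpii] at hxp
      have : p = q := (hq p).mp hxp
      exact hp_ne (by rw [hq_ii, this])
  omega

/-- For any `x ∉ F = {1^i 0^(n-i) : 0 ≤ i ≤ n}`, at most two elements of `F` are at
Hamming distance `1` from `x`. -/
theorem card_hammingDist_one_le_two (n : ℕ) (hn : 1 ≤ n) (x : Fin n → Bool)
    (hx : x ∉ paretoSet n) :
    ((paretoSet n).filter (fun z => hammingDist x z = 1)).card ≤ 2 := by
  by_contra hcon
  push_neg at hcon
  obtain ⟨a, ha, b, hb, c, hc, hab, hac, hbc⟩ := Finset.two_lt_card.mp hcon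
  simp only [Finset.mem_filter, paretoSet, Finset.mem_image, Finset.mem_range] at ha hb hc
  obtain ⟨⟨i, hi, hia⟩, hda⟩ := ha
  obtain ⟨⟨j, hj, hjb⟩, hdb⟩ := hb
  obtain ⟨⟨k, hk, hkc⟩, hdc⟩ := hc
  subst hia hjb hkc
  have hij : i ≠ j := fun h => hab (by rw [h])
  have hik : i ≠ k := fun h => hac (by rw [h])
  have hjk : j ≠ k := fun h => hbc (by rw [h])
  have key : ∀ a b : ℕ, a < b → b ≤ n → hammingDist x (onesZeros n a) = 1 →
      hammingDist x (onesZeros n b) = 1 → b = a + 2 :=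
    fun a b h1 h2 h3 h4 => key_lemma n x hx a b h1 h2 h3 h4
  have hi' : i ≤ n := by omega
  have hj' : j ≤ n := by omega
  have hk' : k ≤ n := by omega
  rcases Nat.lt_trichotomy i j with h1 | h1 | h1
  · rcases Nat.lt_trichotomy j k with h2 | h2 | h2
    · have := key i j h1 hj' hda hdb
      have := key j k h2 hk' hdb hdc
      have := key i k (by omega) hk' hda hdc
      omega
    · exact hjk h2
    · rcases Nat.lt_trichotomy i k with h3 | h3 | h3
      · have := key i j h1 hj' hda hdb
        have := key k j h2 hj' hdc hdb
        have := key i k h3 hk' hda hdc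
        omega
      · exact hik h3
      · have := key i j h1 hj' hda hdb
        have := key k j h2 hj' hdc hdb
        have := key k i h3 hi' hdc hda
        omega
  · exact hij h1
  · rcases Nat.lt_trichotomy i k with h2 | h2 | h2
    · have := key j i h1 hi' hdb hda
      have := key i k h2 hk' hda hdc
      have := key j k (by omega) hk' hdb hdc
      omega
    · exact hik h2
    · rcases Nat.lt_trichotomy j k with h3 | h3 | h3
      · have := key j i h1 hi' hdb hda
        have := key k i h2 hi' hdc hda
        have := key j k h3 hk' hdb hdc
        omega
      · exact hjk h3
      · have := key j i h1 hi' hdb hda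
        have := key k i h2 hi' hdc hda
        have := key k j h3 hj' hdc hdb
        omega
end
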